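/- (Lemma 5, first part) Fix i ∈ {0, …, n−1}, b_1 ≠ b_2 ∈ {1, …, d−k+h}, v ∈ {1, …, s−1}, and a helper set R ⊆ {0, …, n−1} \ {i} with |R| = d. If two codewords c, c' ∈ C satisfy c_{u,b_1,a} + c_{u,b_2,a(i,v)} = c'_{u,b_1,a} + c'_{u,b_2,a(i,v)} for all u ∈ R and all a ∈ V_i, then c_{j,b_1,a} + c_{j,b_2,a(i,v)} = c'_{j,b_1,a} + c'_{j,b_2,a(i,v)} for all j ∈ {0, …, n−1} and all a ∈ V_i. -/

import Mathlib

open Finset Polynomial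

lemma vandermonde_sum_eq_zero {F : Type*} [Field F] {ι : Type*} [DecidableEq ι]
    (M : Finset ι) (p : ι → F) (hp : Set.InjOn p M) (x : ι → F)
    (h : ∀ t < M.card, ∑ m ∈ M, p m ^ t * x m = 0) :
    ∀ m ∈ M, x m = 0 := by
  intro m0 hm0
  set q := Lagrange.basis M p m0 with hq
  have hdeg : q.natDegree < M.card := by
    have h1 : 1 ≤ M.card := card_pos.mpr ⟨m0, hm0⟩
    rw [hq, Lagrange.natDegree_basis hp hm0]
    omega
  have heval : ∀ m ∈ M, q.eval (p m) = if m = m0 then 1 else 0 := by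
    intro m hm
    by_cases hmm : m = m0
    · subst hmm; rw [if_pos rfl]; exact Lagrange.eval_basis_self hp hm
    · rw [if_neg hmm]; exact Lagrange.eval_basis_of_ne (Ne.symm hmm) hm
  have key : x m0 = ∑ m ∈ M, x m * q.eval (p m) := by
    rw [Finset.sum_congr rfl fun m hm => by rw [heval m hm]]
    simp only [mul_ite, mul_one, mul_zero]
    rw [Finset.sum_ite_eq' M m0 x, if_pos hm0]
  have key2 : x m0 = ∑ t ∈ Finset.range M.card, q.coeff t * ∑ m ∈ M, p m ^ t * x m := by
    rw [key]
    rw [Finset.sum_congr rfl fun m _ => by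
      rw [Polynomial.eval_eq_sum_range' hdeg (p m), Finset.mul_sum]]
    rw [Finset.sum_comm]
    refine Finset.sum_congr rfl fun t _ => ?_
    rw [Finset.mul_sum]
    exact Finset.sum_congr rfl fun m _ => by ring
  rw [key2]
  refine Finset.sum_eq_zero fun t ht => ?_
  rw [h t (Finset.mem_range.mp ht), mul_zero]


/-- The code `C` of Construction 1: arrays `c = (c_{i,b,a})` with `i ∈ [0,n)`,
`b ∈ {1,…,B}` (here `B = d-k+h`; entries of `c` with `b` outside this range are
irrelevant), and `a ∈ {0,…,s-1}^n`, satisfying the parity-check equations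
`∑_i λ_i^t c_{i,b,a} + ∑_i δ(a_i) ∑_{e=1}^{s-1} μ_e^t c_{i,b,a(i,e)} = 0`
for all `t ∈ [0,r)`, all `b ∈ {1,…,B}`, and all `a`. -/
def codeC {F : Type*} [Field F] (n r s B : ℕ) (lam : Fin n → F) (mu : Fin s → F)
    (c : Fin n → ℕ → (Fin n → Fin s) → F) : Prop :=
  ∀ t < r, ∀ b : ℕ, 1 ≤ b → b ≤ B → ∀ a : Fin n → Fin s,
    ∑ i, lam i ^ t * c i b a
      + ∑ i, (if (a i : ℕ) = 0 then
          ∑ e ∈ univ.filter (fun e : Fin s => (e : ℕ) ≠ 0),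
            mu e ^ t * c i b (Function.update a i e)
        else 0) = 0

/-- Lemma 5, first part: if two codewords of `C` agree on the downloaded sums
`c_{u,b₁,a} + c_{u,b₂,a(i,v)}` for all helper nodes `u ∈ R` (`|R| = d`,
`i ∉ R`) and all `a ∈ V_i`, then they agree on these sums for every node
`j ∈ [0,n)`. -/
theorem repair_sums_recovered_at_all_nodes
    {F : Type*} [Field F] [Fintype F]
    (n k d h r s N : ℕ) (hk0 : 0 < k) (hr0 : 0 < r) (hh : 1 ≤ h)
    (hnk : n = k + r) (hkd : k < d) (hdn : d + h ≤ n)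
    (hs : s = d - k + 1) (hN : N = (d - k + h) * s ^ n)
    (lam : Fin n → F) (mu : Fin s → F)
    (hlam : Function.Injective lam)
    (hmu : ∀ e e' : Fin s, (e : ℕ) ≠ 0 → (e' : ℕ) ≠ 0 → mu e = mu e' → e = e')
    (hlammu : ∀ (i : Fin n) (e : Fin s), (e : ℕ) ≠ 0 → lam i ≠ mu e)
    (c c' : Fin n → ℕ → (Fin n → Fin s) → F)
    (hc : codeC n r s (d - k + h) lam mu c) (hc' : codeC n r s (d - k + h) lam mu c')
    (i : Fin n) (v : Fin s) (hv : (v : ℕ) ≠ 0)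
    (b1 b2 : ℕ) (hb1 : 1 ≤ b1) (hb1' : b1 ≤ d - k + h)
    (hb2 : 1 ≤ b2) (hb2' : b2 ≤ d - k + h) (hb12 : b1 ≠ b2)
    (R : Finset (Fin n)) (hiR : i ∉ R) (hR : R.card = d)
    (hdownload : ∀ u ∈ R, ∀ a : Fin n → Fin s, (a i : ℕ) = 0 →
      c u b1 a + c u b2 (Function.update a i v)
        = c' u b1 a + c' u b2 (Function.update a i v)) :
    ∀ j : Fin n, ∀ a : Fin n → Fin s, (a i : ℕ) = 0 →
      c j b1 a + c j b2 (Function.update a i v)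
        = c' j b1 a + c' j b2 (Function.update a i v) := by
  classical
  -- difference codeword
  set D : Fin n → ℕ → (Fin n → Fin s) → F := fun j b a => c j b a - c' j b a with hDdef
  -- the repair sums for the difference
  set G : Fin n → (Fin n → Fin s) → F :=
    fun j a => D j b1 a + D j b2 (Function.update a i v) with hGdef
  have hs0 : 0 < s := by omega
  -- D satisfies the parity checks
  have hdiff : ∀ t < r, ∀ b : ℕ, 1 ≤ b → b ≤ d - k + h → ∀ a : Fin n → Fin s,
      ∑ j, lam j ^ t * D j b a
        + ∑ j, (if (a j : ℕ) = 0 then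
            ∑ e ∈ univ.filter (fun e : Fin s => (e : ℕ) ≠ 0),
              mu e ^ t * D j b (Function.update a j e)
          else 0) = 0 := by
    intro t ht b hb hb' a
    have h1 := hc t ht b hb hb' a
    have h2 := hc' t ht b hb hb' a
    have e1 : ∀ j : Fin n, lam j ^ t * D j b a
        = lam j ^ t * c j b a - lam j ^ t * c' j b a := by
      intro j; simp only [hDdef]; ring
    have e2 : ∀ j : Fin n,
        (if (a j : ℕ) = 0 then
            ∑ e ∈ univ.filter (fun e : Fin s => (e : ℕ) ≠ 0),
              mu e ^ t * D j b (Function.update a j e) else 0)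
        = (if (a j : ℕ) = 0 then
            ∑ e ∈ univ.filter (fun e : Fin s => (e : ℕ) ≠ 0),
              mu e ^ t * c j b (Function.update a j e) else 0)
          - (if (a j : ℕ) = 0 then
            ∑ e ∈ univ.filter (fun e : Fin s => (e : ℕ) ≠ 0),
              mu e ^ t * c' j b (Function.update a j e) else 0) := by
      intro j
      split_ifs with hj
      · rw [← Finset.sum_sub_distrib]
        exact Finset.sum_congr rfl fun e _ => by simp only [hDdef]; ring
      · simp
    rw [Finset.sum_congr rfl fun j _ => e1 j, Finset.sum_congr rfl fun j _ => e2 j,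
      Finset.sum_sub_distrib, Finset.sum_sub_distrib]
    linear_combination h1 - h2
  -- G vanishes on the helper nodes
  have hGR : ∀ u ∈ R, ∀ a : Fin n → Fin s, (a i : ℕ) = 0 → G u a = 0 := by
    intro u hu a ha
    simp only [hGdef, hDdef]
    linear_combination hdownload u hu a ha
  -- the key combined parity check
  have key : ∀ a : Fin n → Fin s, (a i : ℕ) = 0 → ∀ t < r,
      ∑ j, (lam j ^ t * G j a
        + (if j = i then
            ∑ e ∈ univ.filter (fun e : Fin s => (e : ℕ) ≠ 0),
              mu e ^ t * D i b1 (Function.update a i e) else 0)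
        + (if j ≠ i ∧ (a j : ℕ) = 0 then
            ∑ e ∈ univ.filter (fun e : Fin s => (e : ℕ) ≠ 0),
              mu e ^ t * G j (Function.update a j e) else 0)) = 0 := by
    intro a ha t ht
    have h1 := hdiff t ht b1 hb1 hb1' a
    have h2 := hdiff t ht b2 hb2 hb2' (Function.update a i v)
    have combine : ∀ j : Fin n,
        lam j ^ t * G j a
        + (if j = i then
            ∑ e ∈ univ.filter (fun e : Fin s => (e : ℕ) ≠ 0),
              mu e ^ t * D i b1 (Function.update a i e) else 0)
        + (if j ≠ i ∧ (a j : ℕ) = 0 then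
            ∑ e ∈ univ.filter (fun e : Fin s => (e : ℕ) ≠ 0),
              mu e ^ t * G j (Function.update a j e) else 0)
        = (lam j ^ t * D j b1 a
            + (if (a j : ℕ) = 0 then
                ∑ e ∈ univ.filter (fun e : Fin s => (e : ℕ) ≠ 0),
                  mu e ^ t * D j b1 (Function.update a j e) else 0))
          + (lam j ^ t * D j b2 (Function.update a i v)
            + (if ((Function.update a i v) j : ℕ) = 0 then
                ∑ e ∈ univ.filter (fun e : Fin s => (e : ℕ) ≠ 0),
                  mu e ^ t * D j b2 (Function.update (Function.update a i v) j e) else 0)) := by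
      intro j
      by_cases hj : j = i
      · subst hj
        rw [if_pos rfl, if_neg (by simp), if_pos ha,
          if_neg (by rw [Function.update_self]; exact hv)]
        simp only [hGdef]
        ring
      · have hup : (Function.update a i v) j = a j := Function.update_of_ne hj v a
        have hcomm : ∀ e : Fin s, Function.update (Function.update a i v) j e
            = Function.update (Function.update a j e) i v :=
          fun e => Function.update_comm (fun hij => hj hij.symm) v e a
        rw [if_neg hj, hup]
        by_cases hz : (a j : ℕ) = 0
        · rw [if_pos hz, if_pos hz, if_pos ⟨hj, hz⟩]
          have : ∑ e ∈ univ.filter (fun e : Fin s => (e : ℕ) ≠ 0),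
              mu e ^ t * G j (Function.update a j e)
              = ∑ e ∈ univ.filter (fun e : Fin s => (e : ℕ) ≠ 0),
                  mu e ^ t * D j b1 (Function.update a j e)
              + ∑ e ∈ univ.filter (fun e : Fin s => (e : ℕ) ≠ 0),
                  mu e ^ t * D j b2 (Function.update (Function.update a i v) j e) := by
            rw [← Finset.sum_add_distrib]
            refine Finset.sum_congr rfl fun e _ => ?_
            rw [hcomm e]
            simp only [hGdef]
            ring
          rw [this]
          simp only [hGdef]
          ring
        · rw [if_neg hz, if_neg hz, if_neg (by tauto)]
          simp only [hGdef]
          ring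
    calc ∑ j, (lam j ^ t * G j a
        + (if j = i then
            ∑ e ∈ univ.filter (fun e : Fin s => (e : ℕ) ≠ 0),
              mu e ^ t * D i b1 (Function.update a i e) else 0)
        + (if j ≠ i ∧ (a j : ℕ) = 0 then
            ∑ e ∈ univ.filter (fun e : Fin s => (e : ℕ) ≠ 0),
              mu e ^ t * G j (Function.update a j e) else 0))
        = ∑ j, ((lam j ^ t * D j b1 a
            + (if (a j : ℕ) = 0 then
                ∑ e ∈ univ.filter (fun e : Fin s => (e : ℕ) ≠ 0),
                  mu e ^ t * D j b1 (Function.update a j e) else 0))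
          + (lam j ^ t * D j b2 (Function.update a i v)
            + (if ((Function.update a i v) j : ℕ) = 0 then
                ∑ e ∈ univ.filter (fun e : Fin s => (e : ℕ) ≠ 0),
                  mu e ^ t * D j b2 (Function.update (Function.update a i v) j e) else 0))) :=
        Finset.sum_congr rfl fun j _ => combine j
      _ = (∑ j, (lam j ^ t * D j b1 a
            + (if (a j : ℕ) = 0 then
                ∑ e ∈ univ.filter (fun e : Fin s => (e : ℕ) ≠ 0),
                  mu e ^ t * D j b1 (Function.update a j e) else 0)))
          + ∑ j, (lam j ^ t * D j b2 (Function.update a i v)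
            + (if ((Function.update a i v) j : ℕ) = 0 then
                ∑ e ∈ univ.filter (fun e : Fin s => (e : ℕ) ≠ 0),
                  mu e ^ t * D j b2 (Function.update (Function.update a i v) j e) else 0)) :=
        Finset.sum_add_distrib
      _ = 0 := by
        rw [Finset.sum_add_distrib, Finset.sum_add_distrib]
        linear_combination h1 + h2
  -- main induction on the number of zero coordinates outside i
  have hmain : ∀ m : ℕ, ∀ a : Fin n → Fin s, (a i : ℕ) = 0 →
      (univ.filter fun j : Fin n => j ≠ i ∧ (a j : ℕ) = 0).card = m → ∀ j, G j a = 0 := by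
    intro m
    induction m using Nat.strong_induction_on with
    | _ m IH =>
      intro a ha hcard
      have hIH : ∀ j : Fin n, j ≠ i → (a j : ℕ) = 0 → ∀ e : Fin s, (e : ℕ) ≠ 0 →
          G j (Function.update a j e) = 0 := by
        intro j hj hz e he
        have hmem : j ∈ univ.filter (fun j : Fin n => j ≠ i ∧ (a j : ℕ) = 0) :=
          mem_filter.mpr ⟨mem_univ _, hj, hz⟩
        have hset : (univ.filter fun j2 : Fin n => j2 ≠ i ∧ ((Function.update a j e) j2 : ℕ) = 0)
            = (univ.filter fun j2 : Fin n => j2 ≠ i ∧ (a j2 : ℕ) = 0).erase j := by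
          ext j2
          simp only [mem_filter, mem_erase, mem_univ, true_and]
          constructor
          · rintro ⟨h1, h2⟩
            by_cases hj2 : j2 = j
            · subst hj2; rw [Function.update_self] at h2; exact absurd h2 he
            · rw [Function.update_of_ne hj2] at h2; exact ⟨hj2, h1, h2⟩
          · rintro ⟨hne, h1, h2⟩
            exact ⟨h1, by rw [Function.update_of_ne hne]; exact h2⟩
        have hlt : ((univ.filter fun j2 : Fin n => j2 ≠ i ∧ (a j2 : ℕ) = 0).erase j).card < m := by
          rw [Finset.card_erase_of_mem hmem, hcard]
          have hpos : 0 < m := hcard ▸ card_pos.mpr ⟨j, hmem⟩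
          omega
        have hai : ((Function.update a j e) i : ℕ) = 0 := by
          rw [Function.update_of_ne (Ne.symm hj)]; exact ha
        exact IH _ hlt _ hai (by rw [hset]) _
      have E : ∀ t < r,
          ∑ j ∈ univ \ R, lam j ^ t * G j a
          + ∑ e ∈ univ.filter (fun e : Fin s => (e : ℕ) ≠ 0),
              mu e ^ t * D i b1 (Function.update a i e) = 0 := by
        intro t ht
        have hk := key a ha t ht
        have h3 : ∀ j : Fin n, (if j ≠ i ∧ (a j : ℕ) = 0 then
            ∑ e ∈ univ.filter (fun e : Fin s => (e : ℕ) ≠ 0),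
              mu e ^ t * G j (Function.update a j e) else 0) = 0 := by
          intro j
          split_ifs with hj
          · exact Finset.sum_eq_zero fun e he => by
              rw [hIH j hj.1 hj.2 e (mem_filter.mp he).2, mul_zero]
          · rfl
        rw [Finset.sum_congr rfl (fun j _ => by rw [h3 j, add_zero]),
          Finset.sum_add_distrib, Finset.sum_ite_eq' univ i, if_pos (mem_univ i),
          ← Finset.sum_sdiff (Finset.subset_univ R),
          show (∑ u ∈ R, lam u ^ t * G u a) = 0 from
            Finset.sum_eq_zero fun u hu => by rw [hGR u hu a ha, mul_zero],
          add_zero] at hk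
        exact hk
      have hfiltcard : (univ.filter (fun e : Fin s => (e : ℕ) ≠ 0)).card = s - 1 := by
        have hset : (univ.filter (fun e : Fin s => (e : ℕ) ≠ 0)) = univ.erase ⟨0, hs0⟩ := by
          ext e
          simp [Fin.ext_iff]
        rw [hset, Finset.card_erase_of_mem (mem_univ _), card_univ, Fintype.card_fin]
      have hMcard : ((univ \ R).disjSum
          (univ.filter (fun e : Fin s => (e : ℕ) ≠ 0))).card = r := by
        rw [Finset.card_disjSum, Finset.card_sdiff_of_subset (Finset.subset_univ R), card_univ,
          Fintype.card_fin, hR, hfiltcard]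
        omega
      have hinj : Set.InjOn (Sum.elim lam mu)
          ((univ \ R).disjSum (univ.filter (fun e : Fin s => (e : ℕ) ≠ 0))) := by
        rintro (j1 | e1) hm1 (j2 | e2) hm2 heq
        · simp only [Sum.elim_inl] at heq
          rw [hlam heq]
        · simp only [Sum.elim_inl, Sum.elim_inr] at heq
          have he2 : (e2 : ℕ) ≠ 0 :=
            (mem_filter.mp (Finset.inr_mem_disjSum.mp (Finset.mem_coe.mp hm2))).2
          exact absurd heq (hlammu j1 e2 he2)
        · simp only [Sum.elim_inl, Sum.elim_inr] at heq
          have he1 : (e1 : ℕ) ≠ 0 :=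
            (mem_filter.mp (Finset.inr_mem_disjSum.mp (Finset.mem_coe.mp hm1))).2
          exact absurd heq.symm (hlammu j2 e1 he1)
        · simp only [Sum.elim_inr] at heq
          have he1 : (e1 : ℕ) ≠ 0 :=
            (mem_filter.mp (Finset.inr_mem_disjSum.mp (Finset.mem_coe.mp hm1))).2
          have he2 : (e2 : ℕ) ≠ 0 :=
            (mem_filter.mp (Finset.inr_mem_disjSum.mp (Finset.mem_coe.mp hm2))).2
          rw [hmu e1 e2 he1 he2 heq]
      have hzero := vandermonde_sum_eq_zero _ (Sum.elim lam mu) hinj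
          (Sum.elim (fun j => G j a) (fun e => D i b1 (Function.update a i e)))
          (by
            intro t ht
            rw [Finset.sum_disjSum]
            simp only [Sum.elim_inl, Sum.elim_inr]
            exact E t (by rwa [hMcard] at ht))
      intro j
      by_cases hjR : j ∈ R
      · exact hGR j hjR a ha
      · have hz := hzero (Sum.inl j) (by simp [Finset.inl_mem_disjSum, hjR])
        simpa using hz
  intro j a ha
  have hfin := hmain _ a ha rfl j
  simp only [hGdef, hDdef] at hfin
  linear_combination hfin
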